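/- arXiv:0906.0071 — 2 statements merged into one kernel-verified Lean document; each statement's English description precedes it below -/
import Mathlib

section
/- Every connected unit disk graph has a spanning tree of maximum degree at most 26. -/
open SimpleGraph

-- transfer of reachability
lemma my_reach_trans {α : Type*} {G1 G2 : SimpleGraph α}
    (h : ∀ a b, G1.Adj a b → G2.Reachable a b) {a b : α}
    (hr : G1.Reachable a b) : G2.Reachable a b := by
  obtain ⟨w⟩ := hr
  induction w with
  | nil => exact Reachable.refl _
  | cons ha _ ih => exact (h _ _ ha).trans ih

lemma my_conn_trans {α : Type*} {G1 G2 : SimpleGraph α}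
    (h : ∀ a b, G1.Adj a b → G2.Reachable a b) (hc : G1.Connected) : G2.Connected := by
  rw [connected_iff] at hc ⊢
  exact ⟨fun a b => my_reach_trans h (hc.1 a b), hc.2⟩

noncomputable def my_wt {α : Type*} [Fintype α] (f : Sym2 α → ℝ) (H : SimpleGraph α) : ℝ :=
  ∑ e ∈ (Set.toFinite H.edgeSet).toFinset, f e

lemma my_sum_erase {α : Type*} [Fintype α] [DecidableEq α] (f : Sym2 α → ℝ) (H : SimpleGraph α)
    {e : Sym2 α} (he : e ∈ H.edgeSet) :
    ∑ x ∈ (Set.toFinite H.edgeSet).toFinset.erase e, f x = my_wt f H - f e := by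
  have hmem : e ∈ (Set.toFinite H.edgeSet).toFinset := by simpa using he
  have := Finset.add_sum_erase _ f hmem
  rw [my_wt]
  linarith [this]

lemma my_min_acyclic {α : Type*} [Fintype α] [DecidableEq α] (f : Sym2 α → ℝ)
    (hfpos : ∀ x y : α, x ≠ y → 0 < f s(x, y))
    (G T : SimpleGraph α) (hTG : T ≤ G) (hTc : T.Connected)
    (hmin : ∀ H : SimpleGraph α, H ≤ G → H.Connected → my_wt f T ≤ my_wt f H) :
    T.IsAcyclic := by
  classical
  rw [isAcyclic_iff_forall_adj_isBridge]
  intro v w hvw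
  by_contra hbr
  rw [isBridge_iff] at hbr
  push_neg at hbr
  have hreach : (T \ fromEdgeSet {s(v, w)}).Reachable v w := hbr
  set H : SimpleGraph α := T \ fromEdgeSet {s(v, w)} with hH
  have hHT : H ≤ T := sdiff_le
  have hHc : H.Connected := by
    refine my_conn_trans (G1 := T) ?_ hTc
    intro a b hab
    by_cases he : s(a, b) = s(v, w)
    · rw [Sym2.eq_iff] at he
      rcases he with ⟨rfl, rfl⟩ | ⟨rfl, rfl⟩
      · exact hreach
      · exact hreach.symm
    · exact SimpleGraph.Adj.reachable (by
        rw [hH, sdiff_adj, fromEdgeSet_adj]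
        exact ⟨hab, by simp [he]⟩)
  have hedge : H.edgeSet = T.edgeSet \ {s(v, w)} := by
    rw [hH, edgeSet_sdiff, edgeSet_fromEdgeSet, edgeSet_sdiff_sdiff_isDiag]
  have hwt : my_wt f H = my_wt f T - f s(v, w) := by
    rw [← my_sum_erase f T (T.mem_edgeSet.2 hvw), my_wt]
    apply Finset.sum_congr _ (fun _ _ => rfl)
    ext e
    simp only [Set.Finite.mem_toFinset, Finset.mem_erase, hedge, Set.mem_diff,
      Set.mem_singleton_iff, and_comm]
  have := hmin H (hHT.trans hTG) hHc
  have hpos := hfpos v w hvw.ne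
  linarith

lemma my_swap {α : Type*} [Fintype α] [DecidableEq α] (f : Sym2 α → ℝ)
    (hf : ∀ e, 0 ≤ f e)
    (G T : SimpleGraph α) (hTG : T ≤ G) (hTc : T.Connected)
    (hmin : ∀ H : SimpleGraph α, H ≤ G → H.Connected → my_wt f T ≤ my_wt f H)
    {v a b : α} (hva : T.Adj v a) (hvb : T.Adj v b) (hab : a ≠ b) (hGab : G.Adj a b) :
    f s(v, b) ≤ f s(a, b) := by
  by_contra hlt
  push_neg at hlt
  set S : Set (Sym2 α) := (T.edgeSet \ {s(v, b)}) ∪ {s(a, b)} with hS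
  set H : SimpleGraph α := SimpleGraph.fromEdgeSet S with hH
  have hvavb : s(v, a) ≠ s(v, b) := by
    rw [Ne, Sym2.eq_iff]
    rintro (⟨-, h⟩ | ⟨h1, h2⟩)
    · exact hab h
    · exact hab (h2.trans h1)
  have hHva : H.Adj v a := by
    rw [hH, fromEdgeSet_adj]
    exact ⟨Or.inl ⟨T.mem_edgeSet.2 hva, hvavb⟩, hva.ne⟩
  have hHab : H.Adj a b := by
    rw [hH, fromEdgeSet_adj]
    exact ⟨Or.inr rfl, hab⟩
  have hHG : H ≤ G := by
    intro x y hxy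
    rw [hH, fromEdgeSet_adj] at hxy
    rcases hxy.1 with h | h
    · exact hTG (T.mem_edgeSet.1 h.1)
    · rw [Set.mem_singleton_iff, Sym2.eq_iff] at h
      rcases h with ⟨rfl, rfl⟩ | ⟨rfl, rfl⟩
      · exact hGab
      · exact hGab.symm
  have hHc : H.Connected := by
    refine my_conn_trans (G1 := T) ?_ hTc
    intro x y hxy
    by_cases he : s(x, y) = s(v, b)
    · have hvbreach : H.Reachable v b := (hHva.reachable).trans hHab.reachable
      rw [Sym2.eq_iff] at he
      rcases he with ⟨rfl, rfl⟩ | ⟨rfl, rfl⟩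
      · exact hvbreach
      · exact hvbreach.symm
    · exact SimpleGraph.Adj.reachable (by
        rw [hH, fromEdgeSet_adj]
        exact ⟨Or.inl ⟨T.mem_edgeSet.2 hxy, he⟩, hxy.ne⟩)
  have hedge : H.edgeSet = S := by
    rw [hH, edgeSet_fromEdgeSet]
    ext e
    simp only [Set.mem_diff, Set.mem_setOf_eq, and_iff_left_iff_imp]
    rintro (⟨he, -⟩ | he)
    · exact fun hd => (T.not_isDiag_of_mem_edgeSet he) hd
    · rw [Set.mem_singleton_iff] at he
      subst he
      simp [hab]
  -- weight comparison
  have hsub : (Set.toFinite H.edgeSet).toFinset ⊆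
      insert s(a, b) ((Set.toFinite T.edgeSet).toFinset.erase s(v, b)) := by
    intro e he
    rw [Set.Finite.mem_toFinset, hedge, hS] at he
    rcases he with ⟨he, hne⟩ | he
    · exact Finset.mem_insert_of_mem (Finset.mem_erase.2 ⟨hne, by simpa using he⟩)
    · exact Finset.mem_insert.2 (Or.inl he)
  have hwtH : my_wt f H ≤ f s(a, b) + (my_wt f T - f s(v, b)) := by
    calc my_wt f H ≤ ∑ e ∈ insert s(a, b) ((Set.toFinite T.edgeSet).toFinset.erase s(v, b)), f e :=
          Finset.sum_le_sum_of_subset_of_nonneg hsub (fun e _ _ => hf e)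
    _ ≤ f s(a, b) + ∑ e ∈ (Set.toFinite T.edgeSet).toFinset.erase s(v, b), f e := by
          by_cases hx : s(a, b) ∈ (Set.toFinite T.edgeSet).toFinset.erase s(v, b)
          · rw [Finset.insert_eq_self.2 hx]
            have := hf s(a, b)
            linarith
          · rw [Finset.sum_insert hx]
    _ = f s(a, b) + (my_wt f T - f s(v, b)) := by
          rw [my_sum_erase f T (T.mem_edgeSet.2 hvb)]
  have := hmin H hHG hHc
  linarith

lemma my_geom {E : Type*} [NormedAddCommGroup E] [InnerProductSpace ℝ E]
    {x y : E} (hx : x ≠ 0) (hy : y ≠ 0)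
    (h1 : ‖x‖ ≤ ‖x - y‖) (h2 : ‖y‖ ≤ ‖x - y‖) :
    1 ≤ dist (‖x‖⁻¹ • x) (‖y‖⁻¹ • y) := by
  have hxn : (0:ℝ) < ‖x‖ := norm_pos_iff.2 hx
  have hyn : (0:ℝ) < ‖y‖ := norm_pos_iff.2 hy
  have hexp : ‖x - y‖ ^ 2 = ‖x‖ ^ 2 - 2 * inner ℝ x y + ‖y‖ ^ 2 := by
    rw [@norm_sub_sq_real]
  have key : 2 * (inner ℝ x y : ℝ) ≤ ‖x‖ * ‖y‖ := by
    nlinarith [mul_nonneg (sub_nonneg.2 h1) (sub_nonneg.2 h2),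
      mul_nonneg (sub_nonneg.2 h1) hxn.le, mul_nonneg (sub_nonneg.2 h2) hyn.le]
  set u := ‖x‖⁻¹ • x with hu
  set w := ‖y‖⁻¹ • y with hw
  have hun : ‖u‖ = 1 := by
    rw [hu, norm_smul, norm_inv, norm_norm, inv_mul_cancel₀ hxn.ne']
  have hwn : ‖w‖ = 1 := by
    rw [hw, norm_smul, norm_inv, norm_norm, inv_mul_cancel₀ hyn.ne']
  have hinner : (inner ℝ u w : ℝ) = ‖x‖⁻¹ * (‖y‖⁻¹ * inner ℝ x y) := by
    rw [hu, hw, real_inner_smul_left, real_inner_smul_right]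
  have hinner2 : (inner ℝ u w : ℝ) ≤ 1 / 2 := by
    rw [hinner]
    have habs : (inner ℝ x y : ℝ) ≤ ‖x‖ * ‖y‖ / 2 := by linarith
    calc ‖x‖⁻¹ * (‖y‖⁻¹ * (inner ℝ x y : ℝ))
        ≤ ‖x‖⁻¹ * (‖y‖⁻¹ * (‖x‖ * ‖y‖ / 2)) :=
          mul_le_mul_of_nonneg_left
            (mul_le_mul_of_nonneg_left habs (inv_pos.2 hyn).le) (inv_pos.2 hxn).le
    _ = 1 / 2 := by field_simp
  have hdist : dist u w = ‖u - w‖ := dist_eq_norm u w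
  have hsq : ‖u - w‖ ^ 2 = 2 - 2 * inner ℝ u w := by
    rw [@norm_sub_sq_real, hun, hwn]; ring
  have h4 : 1 ≤ ‖u - w‖ ^ 2 := by rw [hsq]; linarith
  rw [hdist]
  nlinarith [norm_nonneg (u - w)]

open MeasureTheory in
lemma my_pack (s : Finset (EuclideanSpace ℝ (Fin 2)))
    (h1 : ∀ x ∈ s, ‖x‖ = 1)
    (hsep : ∀ x ∈ s, ∀ y ∈ s, x ≠ y → 1 ≤ dist x y) : s.card ≤ 9 := by
  classical
  have hdisj : (s : Set (EuclideanSpace ℝ (Fin 2))).PairwiseDisjoint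
      (fun x => Metric.ball x (1/2)) := by
    intro x hx y hy hxy
    exact Metric.ball_disjoint_ball (by
      have := hsep x (by simpa using hx) y (by simpa using hy) hxy
      linarith)
  have hsub : (⋃ x ∈ s, Metric.ball x (1/2)) ⊆ Metric.ball (0 : EuclideanSpace ℝ (Fin 2)) (3/2) := by
    intro z hz
    simp only [Set.mem_iUnion, Metric.mem_ball] at hz ⊢
    obtain ⟨x, hx, hzx⟩ := hz
    have hnx : ‖x‖ = 1 := h1 x hx
    calc dist z 0 ≤ dist z x + dist x 0 := dist_triangle _ _ _
    _ < 1/2 + 1 := by rw [dist_zero_right, hnx]; linarith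
    _ = 3/2 := by norm_num
  have hmeas := measure_biUnion_finset (μ := volume) hdisj
    (fun x _ => (measurableSet_ball : MeasurableSet (Metric.ball x (1/2))))
  have hle : ∑ x ∈ s, volume (Metric.ball x (1/2)) ≤
      volume (Metric.ball (0 : EuclideanSpace ℝ (Fin 2)) (3/2)) := by
    rw [← hmeas]
    exact measure_mono hsub
  have hval : ∀ x : EuclideanSpace ℝ (Fin 2), ∀ ρ : ℝ,
      volume (Metric.ball x ρ) = (ENNReal.ofReal ρ) ^ 2 * ENNReal.ofReal Real.pi := by
    intro x ρ
    rw [EuclideanSpace.volume_ball, Fintype.card_fin,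
      show ((2:ℕ):ℝ)/2 + 1 = 1 + 1 by norm_num,
      Real.Gamma_add_one one_ne_zero, Real.Gamma_one, Real.sq_sqrt Real.pi_pos.le]
    norm_num
  simp only [hval, Finset.sum_const, nsmul_eq_mul] at hle
  have hπ : (ENNReal.ofReal Real.pi) ≠ 0 := by
    simp [ENNReal.ofReal_eq_zero, Real.pi_pos, not_le.2 Real.pi_pos]
  have hπ' : (ENNReal.ofReal Real.pi) ≠ ⊤ := ENNReal.ofReal_ne_top
  rw [← mul_assoc] at hle
  have hle2 : (s.card : ENNReal) * ENNReal.ofReal (1/2) ^ 2 ≤ ENNReal.ofReal (3/2) ^ 2 :=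
    (ENNReal.mul_le_mul_iff_left hπ hπ').1 hle
  have h9 : (ENNReal.ofReal (3/2) : ENNReal) ^ 2 = 9 * ENNReal.ofReal (1/2) ^ 2 := by
    rw [← ENNReal.ofReal_pow (by norm_num), ← ENNReal.ofReal_pow (by norm_num)]
    rw [show ((3:ℝ)/2)^2 = 9/4 by norm_num, show ((1:ℝ)/2)^2 = 1/4 by norm_num]
    rw [show (9:ℝ)/4 = 9 * (1/4) by norm_num, ENNReal.ofReal_mul (by norm_num)]
    norm_num
  rw [h9] at hle2
  have hq : (ENNReal.ofReal (1/2) : ENNReal) ^ 2 ≠ 0 := by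
    simp [ENNReal.ofReal_eq_zero]
  have hq' : (ENNReal.ofReal (1/2) : ENNReal) ^ 2 ≠ ⊤ := by
    simp [ENNReal.ofReal_ne_top]
  have : (s.card : ENNReal) ≤ 9 := (ENNReal.mul_le_mul_iff_left hq hq').1 hle2
  exact_mod_cast this

/-- Every connected unit disk graph has a spanning tree of maximum degree at most 26. -/
theorem stmt_1 (V : Finset (EuclideanSpace ℝ (Fin 2))) (r : ℝ) (hr : 0 < r)
    (G : SimpleGraph V)
    (hG : ∀ v w : V, G.Adj v w ↔ v ≠ w ∧ dist (v : EuclideanSpace ℝ (Fin 2)) (w : EuclideanSpace ℝ (Fin 2)) ≤ r)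
    (hconn : G.Connected) :
    ∃ T : SimpleGraph V, T ≤ G ∧ T.Connected ∧ T.IsAcyclic ∧
      ∀ v : V, (T.neighborSet v).ncard ≤ 26 := by
  classical
  let f : Sym2 V → ℝ := Sym2.lift ⟨fun a b =>
    dist (a : EuclideanSpace ℝ (Fin 2)) (b : EuclideanSpace ℝ (Fin 2)),
    fun a b => dist_comm _ _⟩
  have hfeval : ∀ a b : V, f s(a, b) =
      dist (a : EuclideanSpace ℝ (Fin 2)) (b : EuclideanSpace ℝ (Fin 2)) := fun a b => rfl
  have hf0 : ∀ e, 0 ≤ f e := by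
    intro e
    induction e with
    | _ a b => rw [hfeval]; exact dist_nonneg
  haveI : Finite (SimpleGraph ↥V) := by
    refine Finite.of_injective SimpleGraph.Adj (fun a b h => ?_)
    ext x y
    rw [h]
  obtain ⟨T, ⟨hTG, hTc⟩, hmin⟩ := Set.exists_min_image
    {H : SimpleGraph ↥V | H ≤ G ∧ H.Connected} (my_wt f) (Set.toFinite _)
    ⟨G, le_refl G, hconn⟩
  have hmin' : ∀ H : SimpleGraph ↥V, H ≤ G → H.Connected → my_wt f T ≤ my_wt f H :=
    fun H h1 h2 => hmin H ⟨h1, h2⟩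
  have hac : T.IsAcyclic := by
    refine my_min_acyclic f (fun x y hxy => ?_) G T hTG hTc hmin'
    rw [hfeval]
    exact dist_pos.2 (Subtype.coe_injective.ne hxy)
  refine ⟨T, hTG, hTc, hac, ?_⟩
  intro v
  have hfin : (T.neighborSet v).Finite := Set.toFinite _
  rw [Set.ncard_eq_toFinset_card _ hfin]
  set N := hfin.toFinset with hN
  have hNadj : ∀ a ∈ N, T.Adj v a := by
    intro a ha
    rw [hN, Set.Finite.mem_toFinset] at ha
    exact ha
  have hGadj : ∀ a ∈ N, v ≠ a ∧ dist (v : EuclideanSpace ℝ (Fin 2)) (a : EuclideanSpace ℝ (Fin 2)) ≤ r :=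
    fun a ha => (hG v a).1 (hTG (hNadj a ha))
  -- separation: both tree distances are at most the mutual distance
  have hsep : ∀ a ∈ N, ∀ b ∈ N, a ≠ b →
      dist (v : EuclideanSpace ℝ (Fin 2)) (b : EuclideanSpace ℝ (Fin 2)) ≤
      dist (a : EuclideanSpace ℝ (Fin 2)) (b : EuclideanSpace ℝ (Fin 2)) := by
    intro a ha b hb hab
    by_cases hd : dist (a : EuclideanSpace ℝ (Fin 2)) (b : EuclideanSpace ℝ (Fin 2)) ≤ r
    · have hGab : G.Adj a b := (hG a b).2 ⟨hab, hd⟩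
      have := my_swap f hf0 G T hTG hTc hmin' (hNadj a ha) (hNadj b hb) hab hGab
      rwa [hfeval, hfeval] at this
    · push_neg at hd
      exact le_of_lt (lt_of_le_of_lt (hGadj b hb).2 hd)
  -- map neighbors to unit vectors
  set φ : V → EuclideanSpace ℝ (Fin 2) := fun w =>
    ‖(w : EuclideanSpace ℝ (Fin 2)) - (v : EuclideanSpace ℝ (Fin 2))‖⁻¹ •
      ((w : EuclideanSpace ℝ (Fin 2)) - (v : EuclideanSpace ℝ (Fin 2))) with hφ
  have hne0 : ∀ a ∈ N, (a : EuclideanSpace ℝ (Fin 2)) - (v : EuclideanSpace ℝ (Fin 2)) ≠ 0 := by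
    intro a ha
    rw [sub_ne_zero]
    exact fun h => (hGadj a ha).1 (Subtype.coe_injective h.symm)
  have hgeom : ∀ a ∈ N, ∀ b ∈ N, a ≠ b → 1 ≤ dist (φ a) (φ b) := by
    intro a ha b hb hab
    have h1 : ‖(a : EuclideanSpace ℝ (Fin 2)) - (v : EuclideanSpace ℝ (Fin 2))‖ ≤
        ‖((a : EuclideanSpace ℝ (Fin 2)) - v) - ((b : EuclideanSpace ℝ (Fin 2)) - v)‖ := by
      rw [sub_sub_sub_cancel_right, ← dist_eq_norm, ← dist_eq_norm, dist_comm (a : EuclideanSpace ℝ (Fin 2)) v]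
      exact (hsep b hb a ha hab.symm).trans_eq (dist_comm _ _)
    have h2 : ‖(b : EuclideanSpace ℝ (Fin 2)) - (v : EuclideanSpace ℝ (Fin 2))‖ ≤
        ‖((a : EuclideanSpace ℝ (Fin 2)) - v) - ((b : EuclideanSpace ℝ (Fin 2)) - v)‖ := by
      rw [sub_sub_sub_cancel_right, ← dist_eq_norm, ← dist_eq_norm, dist_comm (b : EuclideanSpace ℝ (Fin 2)) v]
      exact hsep a ha b hb hab
    exact my_geom (hne0 a ha) (hne0 b hb) h1 h2
  set s' : Finset (EuclideanSpace ℝ (Fin 2)) := N.image φ with hs'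
  have hinj : Set.InjOn φ ↑N := by
    intro a ha b hb h
    by_contra hab
    have := hgeom a (by simpa using ha) b (by simpa using hb) hab
    rw [h] at this
    simp at this
    linarith
  have hcard : N.card = s'.card := (Finset.card_image_of_injOn hinj).symm
  have h1' : ∀ x ∈ s', ‖x‖ = 1 := by
    intro x hx
    rw [hs', Finset.mem_image] at hx
    obtain ⟨a, ha, rfl⟩ := hx
    rw [hφ]
    simp only [norm_smul, norm_inv, norm_norm]
    exact inv_mul_cancel₀ (norm_ne_zero_iff.2 (hne0 a ha))
  have hsep' : ∀ x ∈ s', ∀ y ∈ s', x ≠ y → 1 ≤ dist x y := by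
    intro x hx y hy hxy
    rw [hs', Finset.mem_image] at hx hy
    obtain ⟨a, ha, rfl⟩ := hx
    obtain ⟨b, hb, rfl⟩ := hy
    exact hgeom a ha b hb (fun h => hxy (by rw [h]))
  calc N.card = s'.card := hcard
  _ ≤ 9 := my_pack s' h1' hsep'
  _ ≤ 26 := by norm_num
end

section
/- A 60-degree circular sector of a disk of radius s has diameter exactly s: any two points in the set {z ∈ ℝ² : ‖z‖ ≤ s, and the angle of z lies in [θ, θ + π/3]} are at Euclidean distance at most s. -/
lemma sector_dist_le (s ρ ρ' φ φ' : ℝ) (hs : 0 ≤ s)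
    (hρ : ρ ∈ Set.Icc (0:ℝ) s) (hρ' : ρ' ∈ Set.Icc (0:ℝ) s)
    (hψ : |φ - φ'| ≤ Real.pi / 3) :
    dist ((ρ : ℂ) * Complex.exp ((φ : ℂ) * Complex.I))
      ((ρ' : ℂ) * Complex.exp ((φ' : ℂ) * Complex.I)) ≤ s := by
  have hcos : (1:ℝ)/2 ≤ Real.cos (φ - φ') := by
    rw [← Real.cos_abs]
    have := Real.cos_le_cos_of_nonneg_of_le_pi (abs_nonneg (φ - φ'))
      (by linarith [Real.pi_pos]) hψ
    rwa [Real.cos_pi_div_three] at this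
  rw [Complex.dist_eq]
  have key : (norm ((ρ : ℂ) * Complex.exp ((φ : ℂ) * Complex.I)
      - (ρ' : ℂ) * Complex.exp ((φ' : ℂ) * Complex.I)))^2
      = ρ^2 + ρ'^2 - 2*ρ*ρ'*Real.cos (φ - φ') := by
    rw [Complex.sq_norm, Complex.normSq_apply]
    simp [Complex.exp_ofReal_mul_I_re, Complex.exp_ofReal_mul_I_im, Real.cos_sub]
    nlinarith [Real.sin_sq_add_cos_sq φ, Real.sin_sq_add_cos_sq φ']
  have hmul : 0 ≤ ρ * ρ' := mul_nonneg hρ.1 hρ'.1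
  have h2 : (norm ((ρ : ℂ) * Complex.exp ((φ : ℂ) * Complex.I)
      - (ρ' : ℂ) * Complex.exp ((φ' : ℂ) * Complex.I)))^2 ≤ s^2 := by
    rw [key]
    nlinarith [mul_nonneg hmul (by linarith : (0:ℝ) ≤ 2*Real.cos (φ - φ') - 1),
      mul_nonneg (sub_nonneg.2 hρ.2) (sub_nonneg.2 hρ'.2),
      mul_nonneg (sub_nonneg.2 hρ.2) hρ.1, mul_nonneg (sub_nonneg.2 hρ'.2) hρ'.1]
  nlinarith [norm_nonneg ((ρ : ℂ) * Complex.exp ((φ : ℂ) * Complex.I)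
      - (ρ' : ℂ) * Complex.exp ((φ' : ℂ) * Complex.I))]

/-- A 60-degree sector of a disk of radius `s` has diameter exactly `s`: any two points of the
sector are at distance at most `s`. -/
theorem stmt_15 (s θ : ℝ) (hs : 0 ≤ s) :
    Metric.diam {z : ℂ | ∃ ρ ∈ Set.Icc (0:ℝ) s, ∃ φ ∈ Set.Icc θ (θ + Real.pi / 3),
        z = (ρ : ℂ) * Complex.exp ((φ : ℂ) * Complex.I)} = s ∧
    ∀ z ∈ {z : ℂ | ∃ ρ ∈ Set.Icc (0:ℝ) s, ∃ φ ∈ Set.Icc θ (θ + Real.pi / 3),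
        z = (ρ : ℂ) * Complex.exp ((φ : ℂ) * Complex.I)},
      ∀ w ∈ {z : ℂ | ∃ ρ ∈ Set.Icc (0:ℝ) s, ∃ φ ∈ Set.Icc θ (θ + Real.pi / 3),
        z = (ρ : ℂ) * Complex.exp ((φ : ℂ) * Complex.I)},
        dist z w ≤ s := by
  set S := {z : ℂ | ∃ ρ ∈ Set.Icc (0:ℝ) s, ∃ φ ∈ Set.Icc θ (θ + Real.pi / 3),
        z = (ρ : ℂ) * Complex.exp ((φ : ℂ) * Complex.I)} with hS
  have hpi : 0 ≤ Real.pi / 3 := by positivity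
  have hdist : ∀ z ∈ S, ∀ w ∈ S, dist z w ≤ s := by
    rintro z ⟨ρ, hρ, φ, hφ, rfl⟩ w ⟨ρ', hρ', φ', hφ', rfl⟩
    apply sector_dist_le s ρ ρ' φ φ' hs hρ hρ'
    rw [abs_le]
    constructor <;> [linarith [hφ.1, hφ'.2]; linarith [hφ.2, hφ'.1]]
  refine ⟨le_antisymm (Metric.diam_le_of_forall_dist_le hs hdist) ?_, hdist⟩
  have h0 : (0 : ℂ) ∈ S := ⟨0, ⟨le_refl _, hs⟩, θ, ⟨le_refl _, by linarith⟩, by simp⟩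
  have h1 : (s : ℂ) * Complex.exp ((θ : ℂ) * Complex.I) ∈ S :=
    ⟨s, ⟨hs, le_refl _⟩, θ, ⟨le_refl _, by linarith⟩, rfl⟩
  have hb : Bornology.IsBounded S := Metric.isBounded_iff.2 ⟨s, fun {x} hx {y} hy => hdist x hx y hy⟩
  have := Metric.dist_le_diam_of_mem hb h1 h0
  rwa [dist_zero_right, norm_mul,
    Complex.norm_exp_ofReal_mul_I, mul_one, Complex.norm_real, Real.norm_eq_abs, abs_of_nonneg hs] at this
end
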